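/- A sequence in (ℤ/nℤ)² consisting of the elements (0,0), (0,1), (1,0), (1,1) with multiplicities a, b, c, d respectively, where each of a, b, c, d is at most n-1, contains no zero-sum subsequence of length n. -/

import Mathlib

theorem square_basic_construction (n a b c d : ℕ) (hn : 0 < n)
    (ha : a ≤ n - 1) (hb : b ≤ n - 1) (hc : c ≤ n - 1) (hd : d ≤ n - 1) :
    ¬ ∃ S ≤ Multiset.replicate a ((0 : ZMod n), (0 : ZMod n)) +
          Multiset.replicate b ((0 : ZMod n), (1 : ZMod n)) +
          Multiset.replicate c ((1 : ZMod n), (0 : ZMod n)) +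
          Multiset.replicate d ((1 : ZMod n), (1 : ZMod n)),
        Multiset.card S = n ∧ S.sum = 0 := by
  rintro ⟨S, hS, hcard, hsum⟩
  rcases Nat.lt_or_ge n 2 with h2 | h2
  · interval_cases n
    obtain rfl : a = 0 := by omega
    obtain rfl : b = 0 := by omega
    obtain rfl : c = 0 := by omega
    obtain rfl : d = 0 := by omega
    simp only [Multiset.replicate_zero, add_zero, Multiset.le_zero] at hS
    subst hS
    simp at hcard
  · haveI : Fact (1 < n) := ⟨h2⟩
    have h01 : (0 : ZMod n) ≠ 1 := zero_ne_one
    set x00 : ZMod n × ZMod n := (0, 0) with hx00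
    set x01 : ZMod n × ZMod n := (0, 1) with hx01
    set x10 : ZMod n × ZMod n := (1, 0) with hx10
    set x11 : ZMod n × ZMod n := (1, 1) with hx11
    have hne1 : x00 ≠ x01 := by simp [hx00, hx01, Prod.ext_iff, h01]
    have hne2 : x00 ≠ x10 := by simp [hx00, hx10, Prod.ext_iff, h01.symm]
    have hne3 : x00 ≠ x11 := by simp [hx00, hx11, Prod.ext_iff, h01.symm]
    have hne4 : x01 ≠ x10 := by simp [hx01, hx10, Prod.ext_iff, h01.symm]
    have hne5 : x01 ≠ x11 := by simp [hx01, hx11, Prod.ext_iff, h01.symm]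
    have hne6 : x10 ≠ x11 := by simp [hx10, hx11, Prod.ext_iff, h01]
    set a' := S.count x00 with ha'
    set b' := S.count x01 with hb'
    set c' := S.count x10 with hc'
    set d' := S.count x11 with hd'
    have hSeq : S = Multiset.replicate a' x00 + Multiset.replicate b' x01 +
        Multiset.replicate c' x10 + Multiset.replicate d' x11 := by
      ext x
      simp only [Multiset.count_add, Multiset.count_replicate]
      by_cases e1 : x = x00
      · subst e1
        simp [hne1, hne2, hne3, Ne.symm hne1, Ne.symm hne2, Ne.symm hne3]
        exact ha'.symm
      by_cases e2 : x = x01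
      · subst e2
        simp [hne1, hne4, hne5, Ne.symm hne1, Ne.symm hne4, Ne.symm hne5]
        exact hb'.symm
      by_cases e3 : x = x10
      · subst e3
        simp [hne2, hne4, hne6, Ne.symm hne2, Ne.symm hne4, Ne.symm hne6]
        exact hc'.symm
      by_cases e4 : x = x11
      · subst e4
        simp [hne3, hne5, hne6, Ne.symm hne3, Ne.symm hne5, Ne.symm hne6]
        exact hd'.symm
      · have hle := Multiset.count_le_of_le x hS
        simp only [Multiset.count_add, Multiset.count_replicate,
          if_neg (Ne.symm e1), if_neg (Ne.symm e2),
          if_neg (Ne.symm e3), if_neg (Ne.symm e4),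
          add_zero] at hle
        simp only [if_neg (Ne.symm e1), if_neg (Ne.symm e2),
          if_neg (Ne.symm e3), if_neg (Ne.symm e4), add_zero]
        omega
    have hA : a' ≤ a := by
      have := Multiset.count_le_of_le x00 hS
      simpa [Multiset.count_replicate, hne1, hne2, hne3, Ne.symm hne1, Ne.symm hne2, Ne.symm hne3] using this
    have hB : b' ≤ b := by
      have := Multiset.count_le_of_le x01 hS
      simpa [Multiset.count_replicate, hne1, hne4, hne5, Ne.symm hne1, Ne.symm hne4, Ne.symm hne5] using this
    have hC : c' ≤ c := by
      have := Multiset.count_le_of_le x10 hS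
      simpa [Multiset.count_replicate, hne2, hne4, hne6, Ne.symm hne2, Ne.symm hne4, Ne.symm hne6] using this
    have hD : d' ≤ d := by
      have := Multiset.count_le_of_le x11 hS
      simpa [Multiset.count_replicate, hne3, hne5, hne6, Ne.symm hne3, Ne.symm hne5, Ne.symm hne6] using this
    rw [hSeq] at hcard hsum
    simp only [Multiset.card_add, Multiset.card_replicate] at hcard
    simp only [Multiset.sum_add, Multiset.sum_replicate, hx00, hx01, hx10, hx11,
      Prod.smul_mk, Prod.mk_add_mk, smul_zero, Prod.mk_eq_zero, add_zero, zero_add] at hsum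
    obtain ⟨hs1, hs2⟩ := hsum
    have hdvd1 : n ∣ c' + d' := by
      have h : ((c' + d' : ℕ) : ZMod n) = 0 := by
        push_cast
        simpa [nsmul_eq_mul] using hs1
      exact (ZMod.natCast_eq_zero_iff _ _).mp h
    have hdvd2 : n ∣ b' + d' := by
      have h : ((b' + d' : ℕ) : ZMod n) = 0 := by
        push_cast
        simpa [nsmul_eq_mul] using hs2
      exact (ZMod.natCast_eq_zero_iff _ _).mp h
    have key : ∀ m : ℕ, n ∣ m → m ≤ 2 * n - 2 → m = 0 ∨ m = n := by
      rintro m ⟨k, rfl⟩ hm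
      have hk : k ≤ 1 := by
        by_contra hk
        push_neg at hk
        have : n * 2 ≤ n * k := Nat.mul_le_mul_left n hk
        omega
      interval_cases k <;> omega
    have h1 := key _ hdvd1 (by omega)
    have h2' := key _ hdvd2 (by omega)
    omega
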